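/- Every diophantine number is a Brjuno number: if there exist γ>0 and τ≥0 with |x − p/q| ≥ γ q^{−2−τ} for all rationals p/q, then B(x) = ∑_{n≥0} β_{n−1} log(1/x_n) < +∞. -/

import Mathlib

/-- Gauss map iterates of `x`: `x₀ = {x}`, `x_{n+1} = {1/x_n}`. -/
noncomputable def gIter (x : ℝ) : ℕ → ℝ
  | 0 => Int.fract x
  | n + 1 => Int.fract (1 / gIter x n)

/-- The Brjuno function `B(x) = ∑_{n≥0} β_{n-1} log(1/x_n)`, with values in `(0,+∞]`. -/
noncomputable def brjuno (x : ℝ) : ENNReal :=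
  ∑' n : ℕ, ENNReal.ofReal
    ((∏ i ∈ Finset.range n, gIter x i) * Real.log (1 / gIter x n))

noncomputable def auxB (x : ℝ) (n : ℕ) : ℝ := ∏ i ∈ Finset.range n, gIter x i

section aux

variable {x : ℝ}

lemma gIter_irr (hx : Irrational x) : ∀ n, Irrational (gIter x n) := by
  intro n
  induction n with
  | zero =>
    show Irrational (Int.fract x)
    rw [← Int.self_sub_floor]
    exact hx.sub_intCast ⌊x⌋
  | succ n ih =>
    have h1 : Irrational (1 / gIter x n) := by simpa [one_div] using ih.inv
    show Irrational (Int.fract (1 / gIter x n))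
    rw [← Int.self_sub_floor]
    exact h1.sub_intCast ⌊1 / gIter x n⌋

lemma gIter_pos (hx : Irrational x) (n : ℕ) : 0 < gIter x n := by
  have hne : gIter x n ≠ 0 := (gIter_irr hx n).ne_zero
  have hnn : 0 ≤ gIter x n := by
    cases n with
    | zero => exact Int.fract_nonneg x
    | succ n => exact Int.fract_nonneg _
  exact lt_of_le_of_ne hnn (Ne.symm hne)

lemma gIter_lt_one (n : ℕ) : gIter x n < 1 := by
  cases n with
  | zero => exact Int.fract_lt_one x
  | succ n => exact Int.fract_lt_one _

lemma auxB_succ (n : ℕ) : auxB x (n + 1) = auxB x n * gIter x n :=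
  Finset.prod_range_succ _ _

lemma auxB_pos (hx : Irrational x) (n : ℕ) : 0 < auxB x n :=
  Finset.prod_pos fun i _ => gIter_pos hx i

lemma auxB_le_one (hx : Irrational x) (n : ℕ) : auxB x n ≤ 1 :=
  Finset.prod_le_one (fun i _ => (gIter_pos hx i).le) (fun i _ => (gIter_lt_one i).le)

lemma floor_inv_ge_one (hx : Irrational x) (n : ℕ) : 1 ≤ ⌊1 / gIter x n⌋ := by
  have hp := gIter_pos hx n
  have hl := gIter_lt_one (x := x) n
  have h1 : (1 : ℝ) ≤ 1 / gIter x n := by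
    rw [le_div_iff₀ hp]; linarith
  exact Int.le_floor.mpr (by exact_mod_cast h1)

lemma gIter_succ_eq (n : ℕ) :
    gIter x (n + 1) = 1 / gIter x n - (⌊1 / gIter x n⌋ : ℝ) := by
  show Int.fract (1 / gIter x n) = _
  rw [Int.fract]

lemma auxB_rec (hx : Irrational x) (n : ℕ) :
    auxB x (n + 2) = auxB x n - (⌊1 / gIter x n⌋ : ℝ) * auxB x (n + 1) := by
  have hp := gIter_pos hx n
  have hne : gIter x n ≠ 0 := hp.ne'
  rw [auxB_succ (n + 1), auxB_succ n, gIter_succ_eq (x := x) n]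
  field_simp

/-- The key continued-fraction invariant. -/
lemma invariant (hx : Irrational x) (n : ℕ) :
    ∃ p q p' q' : ℤ, 0 ≤ q ∧ 1 ≤ q' ∧ ∃ s : ℝ, (s = 1 ∨ s = -1) ∧
      auxB x n = s * ((q : ℝ) * x - p) ∧
      auxB x (n + 1) = -(s * ((q' : ℝ) * x - p')) ∧
      (q' : ℝ) * auxB x n + (q : ℝ) * auxB x (n + 1) = 1 := by
  induction n with
  | zero =>
    refine ⟨1, 0, ⌊x⌋, 1, le_refl 0, le_refl 1, -1, Or.inr rfl, ?_, ?_, ?_⟩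
    · simp [auxB]
    · have : auxB x 1 = gIter x 0 := by simp [auxB]
      rw [this]
      show Int.fract x = _
      rw [← Int.self_sub_floor]; push_cast; ring
    · simp [auxB]
  | succ n ih =>
    obtain ⟨p, q, p', q', hq, hq', s, hs, h1, h2, h3⟩ := ih
    set a : ℤ := ⌊1 / gIter x n⌋ with ha_def
    have ha : 1 ≤ a := floor_inv_ge_one hx n
    have hrec := auxB_rec hx n
    refine ⟨p', q', p + a * p', q + a * q', by linarith, by nlinarith, -s, ?_, ?_, ?_, ?_⟩
    · rcases hs with rfl | rfl
      · exact Or.inr rfl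
      · exact Or.inl (by norm_num)
    · rw [h2]; ring
    · rw [hrec, h1, h2]; push_cast; ring
    · rw [hrec]; push_cast; linear_combination h3

/-- Diophantine lower bound on the Gauss iterates. -/
lemma gIter_lb (hx : Irrational x) {γ τ : ℝ} (hγ : 0 < γ) (hτ : 0 ≤ τ)
    (hdio : ∀ P Q : ℤ, 0 < Q → γ * (Q : ℝ) ^ (-(2 + τ)) ≤ |x - (P : ℝ) / (Q : ℝ)|)
    (n : ℕ) : γ * auxB x n ^ τ ≤ gIter x n := by
  obtain ⟨p, q, p', q', hq, hq', s, hs, h1, h2, h3⟩ := invariant hx n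
  have hBn := auxB_pos hx n
  have hBn1 := auxB_pos hx (n + 1)
  have hq'R : (0 : ℝ) < (q' : ℝ) := by exact_mod_cast hq'
  have hqR : (0 : ℝ) ≤ (q : ℝ) := by exact_mod_cast hq
  -- β(n+1) = |q' x - p'|
  have habs : |(q' : ℝ) * x - p'| = auxB x (n + 1) := by
    rcases hs with rfl | rfl
    · rw [abs_eq hBn1.le]; right; linarith
    · rw [abs_eq hBn1.le]; left; linarith
  -- diophantine: γ q'^(-(1+τ)) ≤ β(n+1)
  have hd := hdio p' q' hq'
  have hmul : (q' : ℝ) * |x - (p' : ℝ) / q'| = |(q' : ℝ) * x - p'| := by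
    have e : (q' : ℝ) * (x - (p' : ℝ) / q') = (q' : ℝ) * x - p' := by
      field_simp
    rw [← e, abs_mul, abs_of_pos hq'R]
  have step1 : γ * (q' : ℝ) ^ (-(1 + τ)) ≤ auxB x (n + 1) := by
    have h4 : (q' : ℝ) * (γ * (q' : ℝ) ^ (-(2 + τ))) ≤ (q' : ℝ) * |x - (p' : ℝ) / q'| :=
      mul_le_mul_of_nonneg_left hd hq'R.le
    rw [hmul, habs] at h4
    have h5 : (q' : ℝ) * (γ * (q' : ℝ) ^ (-(2 + τ))) = γ * (q' : ℝ) ^ (-(1 + τ)) := by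
      have : (q' : ℝ) ^ (-(1 + τ)) = (q' : ℝ) ^ (1 : ℝ) * (q' : ℝ) ^ (-(2 + τ)) := by
        rw [← Real.rpow_add hq'R]; ring_nf
      rw [this, Real.rpow_one]; ring
    linarith [h5 ▸ h4]
  -- q' β(n) ≤ 1
  have hbq : auxB x n * (q' : ℝ) ≤ 1 := by nlinarith
  -- β(n)^(1+τ) ≤ (q'^(1+τ))⁻¹
  have step2 : auxB x n ^ (1 + τ) ≤ ((q' : ℝ) ^ (1 + τ))⁻¹ := by
    have h5 : (auxB x n * (q' : ℝ)) ^ (1 + τ) ≤ 1 :=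
      Real.rpow_le_one (by positivity) hbq (by linarith)
    rw [Real.mul_rpow hBn.le hq'R.le] at h5
    have hqp : (0 : ℝ) < (q' : ℝ) ^ (1 + τ) := Real.rpow_pos_of_pos hq'R _
    rw [← one_div, le_div_iff₀ hqp]
    linarith
  have step3 : γ * auxB x n ^ (1 + τ) ≤ auxB x (n + 1) := by
    have hneg : ((q' : ℝ) ^ (1 + τ))⁻¹ = (q' : ℝ) ^ (-(1 + τ)) :=
      (Real.rpow_neg hq'R.le _).symm
    have := mul_le_mul_of_nonneg_left step2 hγ.le
    rw [hneg] at this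
    linarith
  have hsplit : auxB x n ^ (1 + τ) = auxB x n * auxB x n ^ τ := by
    have : (1 : ℝ) + τ = 1 + τ := rfl
    rw [Real.rpow_add hBn, Real.rpow_one]
  rw [hsplit, auxB_succ n] at step3
  have h6 : auxB x n * (γ * auxB x n ^ τ) ≤ auxB x n * gIter x n := by
    have e : γ * (auxB x n * auxB x n ^ τ) = auxB x n * (γ * auxB x n ^ τ) := by ring
    linarith
  exact le_of_mul_le_mul_left h6 hBn

lemma prod_two_le_half (hx : Irrational x) (n : ℕ) :
    gIter x n * gIter x (n + 1) ≤ 1 / 2 := by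
  have hp := gIter_pos hx n
  have hl := gIter_lt_one (x := x) n
  have hp1 := gIter_pos hx (n + 1)
  have hl1 := gIter_lt_one (x := x) (n + 1)
  have ha : (1 : ℝ) ≤ (⌊1 / gIter x n⌋ : ℝ) := by exact_mod_cast floor_inv_ge_one hx n
  have hstep : gIter x (n + 1) ≤ 1 / gIter x n - 1 := by
    rw [gIter_succ_eq (x := x) n]; linarith
  have key : gIter x n * gIter x (n + 1) ≤ 1 - gIter x n := by
    have h := mul_le_mul_of_nonneg_left hstep hp.le
    have e : gIter x n * (1 / gIter x n - 1) = 1 - gIter x n := by field_simp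
    linarith
  rcases le_or_gt (gIter x n) (1 / 2) with h | h
  · nlinarith
  · linarith

lemma auxB_two_step (hx : Irrational x) (n : ℕ) : auxB x (n + 2) ≤ auxB x n / 2 := by
  have h := prod_two_le_half hx n
  have hB := auxB_pos hx n
  rw [auxB_succ, auxB_succ]
  nlinarith [gIter_pos hx n, gIter_pos hx (n + 1)]

end aux

noncomputable def rr : ℝ := (2⁻¹ : ℝ) ^ ((1 : ℝ) / 2)

lemma rr_pos : 0 < rr := Real.rpow_pos_of_pos (by norm_num) _

lemma rr_lt_one : rr < 1 := Real.rpow_lt_one (by norm_num) (by norm_num) (by norm_num)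

lemma rr_sq : rr ^ (2 : ℕ) = 2⁻¹ := by
  rw [rr, ← Real.rpow_natCast ((2⁻¹ : ℝ) ^ ((1 : ℝ) / 2)) 2, ← Real.rpow_mul (by norm_num)]
  norm_num

lemma half_le_rr : (1 : ℝ) / 2 ≤ rr := by
  have h := Real.rpow_le_rpow_of_exponent_ge (x := (2⁻¹ : ℝ)) (by norm_num) (by norm_num)
    (show (1 : ℝ) / 2 ≤ 1 by norm_num)
  rw [Real.rpow_one] at h
  rw [rr]; linarith

lemma auxB_geom {x : ℝ} (hx : Irrational x) (n : ℕ) : auxB x n ≤ 2 * rr ^ n := by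
  induction n using Nat.twoStepInduction with
  | zero =>
    have : auxB x 0 = 1 := by simp [auxB]
    rw [this]; norm_num
  | one =>
    have h1 : auxB x 1 = gIter x 0 := by simp [auxB]
    have h2 := gIter_lt_one (x := x) 0
    have := half_le_rr
    rw [h1, pow_one]; linarith
  | more n ih _ =>
    have h1 := auxB_two_step hx n
    have e : 2 * rr ^ (n + 2) = rr ^ n := by
      rw [pow_add, rr_sq]; ring
    rw [e]; linarith

lemma tlog {t : ℝ} (h0 : 0 < t) : t * Real.log (1 / t) ≤ 2 * t ^ ((1 : ℝ) / 2) := by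
  set u := t ^ ((1 : ℝ) / 2) with hu
  have hupos : 0 < u := Real.rpow_pos_of_pos h0 _
  have husq : u ^ (2 : ℕ) = t := by
    rw [hu, ← Real.rpow_natCast (t ^ ((1 : ℝ) / 2)) 2, ← Real.rpow_mul h0.le]; norm_num
  have h2 : Real.log (t ^ (-(1 / 2) : ℝ)) ≤ t ^ (-(1 / 2) : ℝ) - 1 :=
    Real.log_le_sub_one_of_pos (Real.rpow_pos_of_pos h0 _)
  rw [Real.log_rpow h0] at h2
  have hneg : t ^ (-(1 / 2) : ℝ) = u⁻¹ := by
    rw [Real.rpow_neg h0.le, hu]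
  rw [hneg] at h2
  have h3 : -Real.log t ≤ 2 * u⁻¹ := by linarith
  have h4 : t * (-Real.log t) ≤ t * (2 * u⁻¹) := mul_le_mul_of_nonneg_left h3 h0.le
  have h5 : t * (2 * u⁻¹) = 2 * u := by
    rw [← husq]; field_simp
  rw [one_div, Real.log_inv]
  linarith


theorem stmt18 (x : ℝ) (hx : Irrational x) (γ τ : ℝ) (hγ : 0 < γ) (hτ : 0 ≤ τ)
    (hdio : ∀ P Q : ℤ, 0 < Q → γ * (Q : ℝ) ^ (-(2 + τ)) ≤ |x - (P : ℝ) / (Q : ℝ)|) :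
    brjuno x ≠ ⊤ := by
  set ρ : ℝ := rr ^ ((1 : ℝ) / 2) with hρ
  have hρ0 : 0 < ρ := Real.rpow_pos_of_pos rr_pos _
  have hρ1 : ρ < 1 := Real.rpow_lt_one rr_pos.le rr_lt_one (by norm_num)
  have hrρ : rr ≤ ρ := by
    have h := Real.rpow_le_rpow_of_exponent_ge rr_pos rr_lt_one.le
      (show (1 : ℝ) / 2 ≤ 1 by norm_num)
    rwa [Real.rpow_one] at h
  have hrρn : ∀ n : ℕ, rr ^ n ≤ ρ ^ n := fun n => pow_le_pow_left₀ rr_pos.le hrρ n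
  have hrρpow : ∀ n : ℕ, (rr ^ n : ℝ) ^ ((1 : ℝ) / 2) = ρ ^ n := by
    intro n
    rw [← Real.rpow_natCast rr n, ← Real.rpow_mul rr_pos.le, mul_comm,
      Real.rpow_mul rr_pos.le, Real.rpow_natCast]
  set C : ℝ := 2 * |Real.log γ| + 4 * τ with hC
  have termbound : ∀ n : ℕ,
      auxB x n * Real.log (1 / gIter x n) ≤ C * ρ ^ n := by
    intro n
    have hBn := auxB_pos hx n
    have hBn1 := auxB_le_one hx n
    have hg := gIter_lb hx hγ hτ hdio n
    have hγB : 0 < γ * auxB x n ^ τ := by positivity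
    have hlog : Real.log (1 / gIter x n) ≤ Real.log (1 / (γ * auxB x n ^ τ)) := by
      rw [one_div, one_div, Real.log_inv, Real.log_inv]
      exact neg_le_neg (Real.log_le_log hγB hg)
    have hlogeq : Real.log (1 / (γ * auxB x n ^ τ)) =
        -Real.log γ + τ * Real.log (1 / auxB x n) := by
      rw [one_div, Real.log_inv,
        Real.log_mul hγ.ne' (Real.rpow_pos_of_pos hBn τ).ne', Real.log_rpow hBn,
        one_div, Real.log_inv]
      ring
    -- first piece : auxB x n * (-Real.log γ) ≤ 2 * |Real.log γ| * ρ ^ n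
    have hgeom := auxB_geom hx n
    have piece1 : auxB x n * -Real.log γ ≤ 2 * |Real.log γ| * ρ ^ n := by
      have h1 : -Real.log γ ≤ |Real.log γ| := neg_le_abs _
      have h2 : auxB x n * -Real.log γ ≤ auxB x n * |Real.log γ| :=
        mul_le_mul_of_nonneg_left h1 hBn.le
      have h3 : auxB x n * |Real.log γ| ≤ (2 * ρ ^ n) * |Real.log γ| := by
        have : auxB x n ≤ 2 * ρ ^ n := le_trans hgeom (by nlinarith [hrρn n])
        exact mul_le_mul_of_nonneg_right this (abs_nonneg _)
      nlinarith [abs_nonneg (Real.log γ)]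
    -- second piece : auxB x n * Real.log (1 / auxB x n) ≤ 4 * ρ ^ n
    have piece2 : auxB x n * Real.log (1 / auxB x n) ≤ 4 * ρ ^ n := by
      have h1 := tlog hBn
      have h2 : (auxB x n : ℝ) ^ ((1 : ℝ) / 2) ≤ (2 * rr ^ n) ^ ((1 : ℝ) / 2) :=
        Real.rpow_le_rpow hBn.le hgeom (by norm_num)
      have h3 : ((2 : ℝ) * rr ^ n) ^ ((1 : ℝ) / 2) =
          (2 : ℝ) ^ ((1 : ℝ) / 2) * ρ ^ n := by
        rw [Real.mul_rpow (by norm_num) (pow_nonneg rr_pos.le n), hrρpow n]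
      have h4 : (2 : ℝ) ^ ((1 : ℝ) / 2) ≤ 2 := by
        have := Real.rpow_le_rpow_of_exponent_le (x := (2 : ℝ)) (by norm_num)
          (show (1 : ℝ) / 2 ≤ 1 by norm_num)
        rwa [Real.rpow_one] at this
      have hρn : (0 : ℝ) ≤ ρ ^ n := by positivity
      nlinarith
    have expand : auxB x n * (-Real.log γ + τ * Real.log (1 / auxB x n)) =
        auxB x n * -Real.log γ + τ * (auxB x n * Real.log (1 / auxB x n)) := by ring
    have hτpiece : τ * (auxB x n * Real.log (1 / auxB x n)) ≤ τ * (4 * ρ ^ n) :=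
      mul_le_mul_of_nonneg_left piece2 hτ
    have hmain : auxB x n * Real.log (1 / gIter x n) ≤
        auxB x n * (-Real.log γ + τ * Real.log (1 / auxB x n)) := by
      rw [← hlogeq]
      exact mul_le_mul_of_nonneg_left hlog hBn.le
    rw [hC]
    nlinarith
  have hCρn : ∀ n : ℕ, 0 ≤ C * ρ ^ n := by
    intro n
    have : (0:ℝ) ≤ C := by rw [hC]; positivity
    positivity
  have hsum : Summable (fun n : ℕ => C * ρ ^ n) :=
    (summable_geometric_of_lt_one hρ0.le hρ1).mul_left C
  have heq : ENNReal.ofReal (∑' n : ℕ, C * ρ ^ n) =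
      ∑' n : ℕ, ENNReal.ofReal (C * ρ ^ n) :=
    ENNReal.ofReal_tsum_of_nonneg hCρn hsum
  have hle : brjuno x ≤ ∑' n : ℕ, ENNReal.ofReal (C * ρ ^ n) := by
    have hb : brjuno x =
        ∑' n : ℕ, ENNReal.ofReal (auxB x n * Real.log (1 / gIter x n)) := rfl
    rw [hb]
    exact ENNReal.tsum_le_tsum fun n => ENNReal.ofReal_le_ofReal (termbound n)
  exact ne_top_of_le_ne_top (heq ▸ ENNReal.ofReal_ne_top) hle
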